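/- Let q ∈ ℕ and fix a relational signature. If two structures with distinguished tuples (S, a⃗) and (S', a⃗') have the same rank-(q+1) first-order type, then for every quantifier-free-definable-from-formulas-of-depth-q update (each relation of the updated structure defined by a first-order formula of quantifier depth at most q with parameters a⃗ resp. a⃗'), the updated structures have the same rank-1 type; more generally, elements b, b' having the same color and satisfying (b = a ↔ b' = a') receive the same new color after the update. -/

import Mathlib

open FirstOrder FirstOrder.Language

/-- The purely unary relational signature with `m` unary relation symbols. -/
def unaryLang (m : ℕ) : FirstOrder.Language where
  Functions := fun _ => Empty
  Relations := fun n => match n with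
    | 1 => Fin m
    | _ => Empty

/-- The `i`-th unary relation symbol of `unaryLang m`. -/
def relIdx (m : ℕ) (i : Fin m) : (unaryLang m).Relations 1 := i

/-- Quantifier depth of a first-order formula. -/
def qdepth {L : FirstOrder.Language} {α : Type*} :
    {n : ℕ} → L.BoundedFormula α n → ℕ
  | _, .falsum => 0
  | _, .equal _ _ => 0
  | _, .rel _ _ => 0
  | _, .imp f g => max (qdepth f) (qdepth g)
  | _, .all f => qdepth f + 1

/-- The structure obtained by redefining each unary relation `i` as the set of
elements `b` satisfying the update formula `u i` with parameter `a` (variable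
`0` is the parameter, variable `1` the argument). -/
def updatedStructure {m : ℕ} {A : Type} [(unaryLang m).Structure A]
    (u : Fin m → (unaryLang m).Formula (Fin 2)) (a : A) :
    (unaryLang m).Structure A where
  funMap := fun {_} f _ => f.elim
  RelMap := fun {n} r x =>
    match n, r, x with
    | 1, i, x => (u i).Realize ![a, x 0]
    | 0, r, _ => r.elim
    | (_ + 2), r, _ => r.elim

namespace UpdatePreserves

open FirstOrder.Language.BoundedFormula

variable {m : ℕ}

lemma term_eq_var {α : Type*} {n : ℕ} (t : (unaryLang m).Term (α ⊕ Fin n)) :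
    ∃ w, t = Term.var w := by
  cases t with
  | var w => exact ⟨w, rfl⟩
  | func f _ => exact (f : Empty).elim

lemma rel_arity : ∀ {k : ℕ}, (unaryLang m).Relations k → k = 1 := by
  intro k r
  match k, r with
  | 1, _ => rfl
  | 0, r => exact (r : Empty).elim
  | (n+2), r => exact (r : Empty).elim

section qdepthLemmas

variable {L : FirstOrder.Language} {α : Type*} {n : ℕ}

@[simp] lemma qdepth_bot : qdepth (⊥ : L.BoundedFormula α n) = 0 := rfl

@[simp] lemma qdepth_imp (f g : L.BoundedFormula α n) :
    qdepth (f.imp g) = max (qdepth f) (qdepth g) := rfl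

@[simp] lemma qdepth_not (f : L.BoundedFormula α n) : qdepth f.not = qdepth f := by
  show max (qdepth f) (qdepth (⊥ : L.BoundedFormula α n)) = qdepth f
  simp

@[simp] lemma qdepth_inf (f g : L.BoundedFormula α n) :
    qdepth (f ⊓ g) = max (qdepth f) (qdepth g) := by
  show qdepth ((f.imp g.not).not) = _
  rw [qdepth_not, qdepth_imp, qdepth_not]

@[simp] lemma qdepth_top : qdepth (⊤ : L.BoundedFormula α n) = 0 := by
  show qdepth ((⊥ : L.BoundedFormula α n).not) = 0
  rw [qdepth_not, qdepth_bot]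

@[simp] lemma qdepth_all (f : L.BoundedFormula α (n+1)) :
    qdepth f.all = qdepth f + 1 := rfl

@[simp] lemma qdepth_ex (f : L.BoundedFormula α (n+1)) :
    qdepth f.ex = qdepth f + 1 := by
  show qdepth f.not.all.not = _
  rw [qdepth_not, qdepth_all, qdepth_not]

lemma qdepth_castLE : ∀ {k k' : ℕ} (h : k ≤ k') (φ : L.BoundedFormula α k),
    qdepth (φ.castLE h) = qdepth φ
  | _, _, _, .falsum => rfl
  | _, _, _, .equal _ _ => rfl
  | _, _, _, .rel _ _ => rfl
  | _, _, h, .imp f g => by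
      show max (qdepth (f.castLE h)) (qdepth (g.castLE h)) = _
      rw [qdepth_castLE, qdepth_castLE]; rfl
  | _, _, h, .all f => by
      show qdepth (f.castLE _) + 1 = _
      rw [qdepth_castLE]; rfl

lemma qdepth_relabel {β : Type*} {N : ℕ} (g : α → β ⊕ Fin N) :
    ∀ {k : ℕ} (φ : L.BoundedFormula α k), qdepth (φ.relabel g) = qdepth φ
  | _, .falsum => rfl
  | _, .equal _ _ => rfl
  | _, .rel _ _ => rfl
  | _, .imp f₁ f₂ => by
      show max (qdepth (f₁.relabel g)) (qdepth (f₂.relabel g)) = _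
      rw [qdepth_relabel g f₁, qdepth_relabel g f₂]; rfl
  | _, .all f => by
      show qdepth ((f.relabel g).castLE _) + 1 = _
      rw [qdepth_castLE, qdepth_relabel g f]; rfl

end qdepthLemmas

/-- The parameter variable, in a context with one bound variable. -/
def xvar : (unaryLang m).Term (Fin 1 ⊕ Fin 1) := Term.var (Sum.inl 0)

/-- The bound variable, in a context with one bound variable. -/
def yvar : (unaryLang m).Term (Fin 1 ⊕ Fin 1) := Term.var (Sum.inr 0)

/-- The atomic formula `R i (bound var)`. -/
def atom (i : Fin m) : (unaryLang m).BoundedFormula (Fin 1) 1 :=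
  (relIdx m i).boundedFormula ![yvar]

/-- The atomic formula `R i (parameter)`. -/
def atomP (i : Fin m) : (unaryLang m).Formula (Fin 1) :=
  (relIdx m i).boundedFormula ![Term.var (Sum.inl 0)]

/-- The formula asserting the bound variable has the color described by `s`. -/
noncomputable def colorConj (s : Fin m → Bool) : (unaryLang m).BoundedFormula (Fin 1) 1 :=
  BoundedFormula.iInf (fun i => if s i then atom i else (atom i).not)

/-- Relabels a two-variable formula so the first variable is the parameter and
the second variable is a bound variable. -/
def relabel2 (ψ : (unaryLang m).Formula (Fin 2)) :
    (unaryLang m).BoundedFormula (Fin 1) 1 :=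
  BoundedFormula.relabel ![Sum.inl 0, Sum.inr 0] ψ

@[simp] lemma qdepth_atom (i : Fin m) : qdepth (atom i) = 0 := rfl

@[simp] lemma qdepth_atomP (i : Fin m) : qdepth (atomP i) = 0 := rfl

@[simp] lemma qdepth_bdEqual (t₁ t₂ : (unaryLang m).Term (Fin 1 ⊕ Fin 1)) :
    qdepth (t₁.bdEqual t₂) = 0 := rfl

lemma qdepth_foldr_inf {L : FirstOrder.Language} {α : Type*} {n : ℕ}
    (l : List (L.BoundedFormula α n)) (h : ∀ φ ∈ l, qdepth φ = 0) :
    qdepth (l.foldr (· ⊓ ·) ⊤) = 0 := by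
  induction l with
  | nil => simp
  | cons hd tl ih =>
    simp only [List.foldr_cons, qdepth_inf]
    rw [h hd (by simp), ih (fun φ hφ => h φ (by simp [hφ]))]
    simp

@[simp] lemma qdepth_colorConj (s : Fin m → Bool) : qdepth (colorConj s) = 0 := by
  unfold colorConj BoundedFormula.iInf
  apply qdepth_foldr_inf
  intro φ hφ
  simp only [List.mem_map] at hφ
  obtain ⟨i, _, rfl⟩ := hφ
  by_cases hi : s i <;> simp [hi]

@[simp] lemma qdepth_relabel2 (ψ : (unaryLang m).Formula (Fin 2)) :
    qdepth (relabel2 ψ) = qdepth ψ := by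
  unfold relabel2
  exact qdepth_relabel _ ψ

section Realize

variable {M : Type} [(unaryLang m).Structure M]

lemma fun1_eq (f : Fin 1 → M) : f = ![f 0] := by
  funext j; fin_cases j; simp

lemma realize_atom (i : Fin m) (v xs : Fin 1 → M) :
    (atom i).Realize v xs ↔ Structure.RelMap (relIdx m i) ![xs 0] := by
  rw [atom, BoundedFormula.realize_rel]
  apply iff_of_eq
  congr 1
  funext j
  fin_cases j
  simp [yvar]

lemma realize_atomP (i : Fin m) (v : Fin 1 → M) :
    (atomP i).Realize v ↔ Structure.RelMap (relIdx m i) ![v 0] := by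
  have h0 : (atomP i).Realize v ↔ BoundedFormula.Realize (atomP i) v default := Iff.rfl
  rw [h0, atomP, BoundedFormula.realize_rel]
  apply iff_of_eq
  congr 1
  funext j
  fin_cases j
  simp

lemma realize_colorConj (s : Fin m → Bool) (v xs : Fin 1 → M) :
    (colorConj s).Realize v xs ↔
      ∀ i, (Structure.RelMap (relIdx m i) ![xs 0] ↔ s i = true) := by
  rw [colorConj, BoundedFormula.realize_iInf]
  apply forall_congr'
  intro i
  by_cases hi : s i
  · simp [hi, realize_atom]
  · simp [hi, realize_atom]

lemma realize_relabel2 (ψ : (unaryLang m).Formula (Fin 2)) (v xs : Fin 1 → M) :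
    (relabel2 ψ).Realize v xs ↔ ψ.Realize ![v 0, xs 0] := by
  rw [relabel2, BoundedFormula.realize_relabel]
  have e1 : (Sum.elim v (xs ∘ Fin.castAdd 0) ∘ ![Sum.inl 0, Sum.inr 0]) = ![v 0, xs 0] := by
    funext j
    fin_cases j <;> simp
  have e2 : (xs ∘ Fin.natAdd 1) = (default : Fin 0 → M) :=
    funext (fun j => j.elim0)
  rw [e1, e2]
  rfl

lemma realize_ex1 (χ : (unaryLang m).BoundedFormula (Fin 1) 1) (v : Fin 1 → M) :
    Formula.Realize (χ.ex) v ↔ ∃ y : M, χ.Realize v ![y] := by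
  show BoundedFormula.Realize (χ.ex) v default ↔ _
  rw [BoundedFormula.realize_ex]
  apply exists_congr
  intro y
  have e : Fin.snoc (default : Fin 0 → M) y = ![y] := by
    funext j; fin_cases j; simp [Fin.snoc]
  rw [e]

/-- Swapping two elements of the same color is an automorphism of a unary
structure. -/
noncomputable def swapEquiv [DecidableEq M] (c d : M)
    (h : ∀ i, Structure.RelMap (relIdx m i) ![c] ↔ Structure.RelMap (relIdx m i) ![d]) :
    M ≃[unaryLang m] M where
  toEquiv := Equiv.swap c d
  map_fun' := by
    intro n f x
    exact (f : Empty).elim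
  map_rel' := by
    intro n r x
    have hk := rel_arity (m := m) r
    subst hk
    set z := x 0 with hz
    have hx : ((Equiv.swap c d : M ≃ M) ∘ x) = ![Equiv.swap c d z] := by
      funext j; fin_cases j; simp [hz]
    have hx2 : x = ![z] := fun1_eq x
    show Structure.RelMap r ((Equiv.swap c d : M ≃ M) ∘ x) ↔ Structure.RelMap r x
    rw [hx, hx2]
    rcases eq_or_ne z c with rfl | hc
    · rw [Equiv.swap_apply_left]
      exact (h r).symm
    · rcases eq_or_ne z d with rfl | hd
      · rw [Equiv.swap_apply_right]
        exact h r
      · rw [Equiv.swap_apply_of_ne_of_ne hc hd]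

lemma realize_swap [DecidableEq M] (ψ : (unaryLang m).Formula (Fin 2)) (p c d : M)
    (h : ∀ i, Structure.RelMap (relIdx m i) ![c] ↔ Structure.RelMap (relIdx m i) ![d])
    (hpc : c ≠ p) (hpd : d ≠ p) :
    ψ.Realize ![p, c] ↔ ψ.Realize ![p, d] := by
  have key := StrongHomClass.realize_formula (g := swapEquiv c d h) (φ := ψ) (v := ![p, c])
  have e : ((swapEquiv c d h : M ≃[unaryLang m] M) ∘ ![p, c]) = ![p, d] := by
    funext j
    fin_cases j
    · show Equiv.swap c d p = p
      exact Equiv.swap_apply_of_ne_of_ne hpc.symm hpd.symm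
    · show Equiv.swap c d c = d
      exact Equiv.swap_apply_left c d
  rw [e] at key
  exact key.symm

end Realize

section CrossStructure

variable {q : ℕ} {A B : Type} [(unaryLang m).Structure A] [(unaryLang m).Structure B]

lemma color_param (a : A) (a' : B)
    (htype : ∀ φ : (unaryLang m).Formula (Fin 1), qdepth φ ≤ q + 1 →
      (φ.Realize ![a] ↔ φ.Realize ![a'])) :
    ∀ i, Structure.RelMap (relIdx m i) ![a] ↔ Structure.RelMap (relIdx m i) ![a'] := by
  intro i
  have h := htype (atomP i) (by simp)
  rw [realize_atomP, realize_atomP] at h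
  simpa using h

lemma partner (a : A) (a' : B)
    (htype : ∀ φ : (unaryLang m).Formula (Fin 1), qdepth φ ≤ q + 1 →
      (φ.Realize ![a] ↔ φ.Realize ![a'])) :
    ∀ x : A, ∃ x' : B,
      (∀ i, Structure.RelMap (relIdx m i) ![x] ↔ Structure.RelMap (relIdx m i) ![x']) ∧
      ((x = a) ↔ (x' = a')) := by
  classical
  intro x
  by_cases hxa : x = a
  · refine ⟨a', fun i => ?_, by simp [hxa]⟩
    rw [hxa]
    exact color_param a a' htype i
  · set s : Fin m → Bool := fun i => decide (Structure.RelMap (relIdx m i) ![x]) with hs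
    set φ : (unaryLang m).Formula (Fin 1) := ((yvar.bdEqual xvar).not ⊓ colorConj s).ex with hφ
    have hd : qdepth φ ≤ q + 1 := by
      rw [hφ, qdepth_ex, qdepth_inf, qdepth_not, qdepth_bdEqual, qdepth_colorConj]
      omega
    have hA : φ.Realize ![a] := by
      rw [hφ, realize_ex1]
      refine ⟨x, ?_⟩
      rw [BoundedFormula.realize_inf, BoundedFormula.realize_not, realize_colorConj]
      constructor
      · simp only [BoundedFormula.realize_bdEqual, yvar, xvar, Term.realize_var,
          Sum.elim_inr, Sum.elim_inl, Matrix.cons_val_zero]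
        exact hxa
      · intro i
        simp [hs]
    have hB := (htype φ hd).mp hA
    rw [hφ, realize_ex1] at hB
    obtain ⟨y, hy⟩ := hB
    rw [BoundedFormula.realize_inf, BoundedFormula.realize_not, realize_colorConj] at hy
    obtain ⟨hy1, hy2⟩ := hy
    have hyne : ¬ (y = a') := by
      simpa only [BoundedFormula.realize_bdEqual, yvar, xvar, Term.realize_var,
        Sum.elim_inr, Sum.elim_inl, Matrix.cons_val_zero] using hy1
    refine ⟨y, fun i => ?_, by simp [hxa, hyne]⟩
    have h2 := hy2 i
    simp only [Matrix.cons_val_zero, hs, decide_eq_true_eq] at h2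
    exact h2.symm

lemma cross (a : A) (a' : B)
    (htype : ∀ φ : (unaryLang m).Formula (Fin 1), qdepth φ ≤ q + 1 →
      (φ.Realize ![a] ↔ φ.Realize ![a'])) :
    ∀ ψ : (unaryLang m).Formula (Fin 2), qdepth ψ ≤ q →
      ∀ (b : A) (b' : B),
        (∀ i, Structure.RelMap (relIdx m i) ![b] ↔ Structure.RelMap (relIdx m i) ![b']) →
        ((b = a) ↔ (b' = a')) →
        (ψ.Realize ![a, b] ↔ ψ.Realize ![a', b']) := by
  classical
  intro ψ hψ b b' hcol hiff
  by_cases hba : b = a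
  · have hb'a : b' = a' := hiff.mp hba
    rw [hba, hb'a]
    set φ : (unaryLang m).Formula (Fin 1) := ((yvar.bdEqual xvar) ⊓ relabel2 ψ).ex with hφ
    have hd : qdepth φ ≤ q + 1 := by
      rw [hφ, qdepth_ex, qdepth_inf, qdepth_bdEqual, qdepth_relabel2, Nat.zero_max]
      omega
    have key : ∀ {M : Type} [(unaryLang m).Structure M] (p : M),
        φ.Realize ![p] ↔ ψ.Realize ![p, p] := by
      intro M _ p
      rw [hφ, realize_ex1]
      constructor
      · rintro ⟨y, hy⟩
        rw [BoundedFormula.realize_inf, realize_relabel2] at hy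
        obtain ⟨h1, h2⟩ := hy
        have hyp : y = p := by
          simpa only [BoundedFormula.realize_bdEqual, yvar, xvar, Term.realize_var,
            Sum.elim_inr, Sum.elim_inl, Matrix.cons_val_zero] using h1
        simp only [Matrix.cons_val_zero] at h2
        rwa [hyp] at h2
      · intro h
        refine ⟨p, ?_⟩
        rw [BoundedFormula.realize_inf, realize_relabel2]
        constructor
        · simp [yvar, xvar, BoundedFormula.realize_bdEqual]
        · simpa using h
    exact (key a).symm.trans ((htype φ hd).trans (key a'))
  · have hb'a : ¬ (b' = a') := fun h => hba (hiff.mpr h)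
    set s : Fin m → Bool := fun i => decide (Structure.RelMap (relIdx m i) ![b]) with hs
    set φ : (unaryLang m).Formula (Fin 1) :=
      ((yvar.bdEqual xvar).not ⊓ (colorConj s ⊓ relabel2 ψ)).ex with hφ
    have hd : qdepth φ ≤ q + 1 := by
      rw [hφ, qdepth_ex, qdepth_inf, qdepth_inf, qdepth_not, qdepth_bdEqual,
        qdepth_colorConj, qdepth_relabel2, Nat.zero_max, Nat.zero_max]
      omega
    have key : ∀ {M : Type} [(unaryLang m).Structure M] (p : M),
        φ.Realize ![p] ↔ ∃ y : M, y ≠ p ∧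
          (∀ i, (Structure.RelMap (relIdx m i) ![y] ↔ s i = true)) ∧ ψ.Realize ![p, y] := by
      intro M _ p
      rw [hφ, realize_ex1]
      apply exists_congr
      intro y
      rw [BoundedFormula.realize_inf, BoundedFormula.realize_inf, BoundedFormula.realize_not,
        realize_colorConj, realize_relabel2]
      simp only [BoundedFormula.realize_bdEqual, yvar, xvar, Term.realize_var,
        Sum.elim_inr, Sum.elim_inl, Matrix.cons_val_zero, ne_eq]
    constructor
    · intro h
      have hA : φ.Realize ![a] := (key a).mpr
        ⟨b, hba, fun i => by simp [hs], by simpa using h⟩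
      obtain ⟨y, hy1, hy2, hy3⟩ := (key a').mp ((htype φ hd).mp hA)
      have hcolyb : ∀ i, Structure.RelMap (relIdx m i) ![y] ↔
          Structure.RelMap (relIdx m i) ![b'] := by
        intro i
        rw [hy2 i]
        simp only [hs, decide_eq_true_eq]
        exact hcol i
      exact (realize_swap ψ a' y b' hcolyb hy1 hb'a).mp hy3
    · intro h
      have hB : φ.Realize ![a'] := (key a').mpr
        ⟨b', hb'a, fun i => by simp only [hs, decide_eq_true_eq]; exact (hcol i).symm,
          by simpa using h⟩
      obtain ⟨y, hy1, hy2, hy3⟩ := (key a).mp ((htype φ hd).mpr hB)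
      have hcolyb : ∀ i, Structure.RelMap (relIdx m i) ![y] ↔
          Structure.RelMap (relIdx m i) ![b] := by
        intro i
        rw [hy2 i]
        simp only [hs, decide_eq_true_eq]
      exact (realize_swap ψ a y b hcolyb hy1 hba).mp hy3

end CrossStructure

end UpdatePreserves

/-- If `(S, a)` and `(S', a')` have the same rank-`(q+1)` first-order type over
a purely unary signature, then for every update defined by formulas of
quantifier depth at most `q` (with parameter `a` resp. `a'`), the updated
structures have the same rank-`1` type; more generally, elements `b`, `b'`
with the same color satisfying `b = a ↔ b' = a'` receive the same new color
after the update. -/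
theorem update_preserves_type (m q : ℕ) {A B : Type}
    [(unaryLang m).Structure A] [(unaryLang m).Structure B] (a : A) (a' : B)
    (htype : ∀ φ : (unaryLang m).Formula (Fin 1), qdepth φ ≤ q + 1 →
      (φ.Realize ![a] ↔ φ.Realize ![a']))
    (u : Fin m → (unaryLang m).Formula (Fin 2)) (hu : ∀ i, qdepth (u i) ≤ q) :
    (∀ ψ : (unaryLang m).Sentence, qdepth ψ ≤ 1 →
      (@Sentence.Realize (unaryLang m) A (updatedStructure u a) ψ ↔
        @Sentence.Realize (unaryLang m) B (updatedStructure u a') ψ)) ∧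
    (∀ (b : A) (b' : B),
      (∀ i : Fin m,
        (Structure.RelMap (relIdx m i) ![b] ↔ Structure.RelMap (relIdx m i) ![b'])) →
      ((b = a) ↔ (b' = a')) →
      ∀ i : Fin m, ((u i).Realize ![a, b] ↔ (u i).Realize ![a', b'])) := by
  classical
  have htype' : ∀ φ : (unaryLang m).Formula (Fin 1), qdepth φ ≤ q + 1 →
      (φ.Realize ![a'] ↔ φ.Realize ![a]) := fun φ h => (htype φ h).symm
  have hcross := UpdatePreserves.cross a a' htype
  have hpartnerAB := UpdatePreserves.partner a a' htype
  have hpartnerBA := UpdatePreserves.partner a' a htype'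
  constructor
  · have main : ∀ {n : ℕ} (φ : (unaryLang m).BoundedFormula Empty n),
        qdepth φ + n ≤ 1 →
        ∀ (e : Empty → A) (e' : Empty → B) (v : Fin n → A) (v' : Fin n → B),
          (∀ (k : Fin n) (i : Fin m),
            ((u i).Realize ![a, v k] ↔ (u i).Realize ![a', v' k])) →
          (∀ k l : Fin n, v k = v l ↔ v' k = v' l) →
          (@BoundedFormula.Realize _ A (updatedStructure u a) _ _ φ e v ↔
            @BoundedFormula.Realize _ B (updatedStructure u a') _ _ φ e' v') := by
      intro n φ
      induction φ with
      | falsum => exact fun _ _ _ _ _ _ _ => Iff.rfl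
      | equal t₁ t₂ =>
        intro _ e e' v v' hc he
        obtain ⟨w₁, rfl⟩ := UpdatePreserves.term_eq_var t₁
        obtain ⟨w₂, rfl⟩ := UpdatePreserves.term_eq_var t₂
        cases w₁ with
        | inl e0 => exact e0.elim
        | inr k =>
          cases w₂ with
          | inl e0 => exact e0.elim
          | inr l => exact he k l
      | rel r ts =>
        intro _ e e' v v' hc he
        have h1 := UpdatePreserves.rel_arity (m := m) r
        subst h1
        obtain ⟨w, hw⟩ := UpdatePreserves.term_eq_var (ts 0)
        cases w with
        | inl e0 => exact e0.elim
        | inr k =>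
          have hts : ts = ![Term.var (Sum.inr k)] := by
            funext j; fin_cases j; exact hw
          subst hts
          exact hc k r
      | imp f g ihf ihg =>
        rename_i n'
        intro hd e e' v v' hc he
        rw [UpdatePreserves.qdepth_imp] at hd
        have h1 : qdepth f + n' ≤ 1 :=
          le_trans (Nat.add_le_add_right (le_max_left _ _) _) hd
        have h2 : qdepth g + n' ≤ 1 :=
          le_trans (Nat.add_le_add_right (le_max_right _ _) _) hd
        simp only [BoundedFormula.realize_imp]
        rw [ihf h1 e e' v v' hc he, ihg h2 e e' v v' hc he]
      | all ψ ih =>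
        rename_i n'
        intro hd e e' v v' hc he
        rw [UpdatePreserves.qdepth_all] at hd
        have hn : n' = 0 := by omega
        subst hn
        have hdq : qdepth ψ = 0 := by omega
        simp only [BoundedFormula.realize_all]
        have snocA : ∀ (w : Fin 0 → A) (x : A) (k : Fin 1),
            (Fin.snoc w x : Fin 1 → A) k = x := by
          intro w x k; fin_cases k; simp [Fin.snoc]
        have snocB : ∀ (w : Fin 0 → B) (x : B) (k : Fin 1),
            (Fin.snoc w x : Fin 1 → B) k = x := by
          intro w x k; fin_cases k; simp [Fin.snoc]
        constructor
        · intro h x'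
          obtain ⟨x, hx1, hx2⟩ := hpartnerBA x'
          have hnew : ∀ (k : Fin 1) (i : Fin m),
              ((u i).Realize ![a, (Fin.snoc v x : Fin 1 → A) k] ↔
                (u i).Realize ![a', (Fin.snoc v' x' : Fin 1 → B) k]) := by
            intro k i
            rw [snocA v x k, snocB v' x' k]
            exact hcross (u i) (hu i) x x' (fun j => (hx1 j).symm) hx2.symm
          have heq : ∀ k l : Fin 1,
              (Fin.snoc v x : Fin 1 → A) k = (Fin.snoc v x : Fin 1 → A) l ↔
              (Fin.snoc v' x' : Fin 1 → B) k = (Fin.snoc v' x' : Fin 1 → B) l := by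
            intro k l
            rw [snocA v x k, snocA v x l, snocB v' x' k, snocB v' x' l]
            simp
          exact (ih (by omega) e e' (Fin.snoc v x) (Fin.snoc v' x') hnew heq).mp (h x)
        · intro h x
          obtain ⟨x', hx1, hx2⟩ := hpartnerAB x
          have hnew : ∀ (k : Fin 1) (i : Fin m),
              ((u i).Realize ![a, (Fin.snoc v x : Fin 1 → A) k] ↔
                (u i).Realize ![a', (Fin.snoc v' x' : Fin 1 → B) k]) := by
            intro k i
            rw [snocA v x k, snocB v' x' k]
            exact hcross (u i) (hu i) x x' hx1 hx2
          have heq : ∀ k l : Fin 1,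
              (Fin.snoc v x : Fin 1 → A) k = (Fin.snoc v x : Fin 1 → A) l ↔
              (Fin.snoc v' x' : Fin 1 → B) k = (Fin.snoc v' x' : Fin 1 → B) l := by
            intro k l
            rw [snocA v x k, snocA v x l, snocB v' x' k, snocB v' x' l]
            simp
          exact (ih (by omega) e e' (Fin.snoc v x) (Fin.snoc v' x') hnew heq).mpr (h x')
    intro ψ hψ
    exact main ψ (by omega) default default default default
      (fun k => k.elim0) (fun k => k.elim0)
  · intro b b' hcol hiff i
    exact hcross (u i) (hu i) b b' hcol hiff
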